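/- Let H be a real Hilbert space, C ⊆ H nonempty closed convex. Suppose each f_i (i = 1,…,N) satisfies (A1)–(A4), each A_k : C → H (k = 1,…,K) is α-inverse strongly monotone, each S_j (j = 1,…,M) is asymptotically κ-strictly pseudocontractive with sequence {k_n} ⊆ [1,∞), k_n → 1, the parameters satisfy 0 < α_n < 1 with limsup α_n < 1, κ ≤ β_n ≤ b < 1, 0 < d ≤ r_n ≤ e < 2α, and F = (∩_{i=1}^N EP(f_i,C)) ∩ (∩_{k=1}^K VI(A_k,C)) ∩ (∩_{j=1}^M F(S_j)) is nonempty and bounded with F ⊆ {v : ‖v‖ ≤ ω}. Let x_0 ∈ C, C_0 = C, and for n ≥ 0: y_n^i ∈ C satisfies f_i(y_n^i, y) + (1/r_n)⟨y − y_n^i, y_n^i − x_n⟩ ≥ 0 for all y ∈ C (i = 1,…,N); y_n^{N+k} = P_C(x_n − r_n A_k x_n) (k = 1,…,K); i_n maximizes ‖y_n^i − x_n‖ over i = 1,…,N+K and ȳ_n = y_n^{i_n}; z_n^j = α_n x_n + (1−α_n)(β_n ȳ_n + (1−β_n) S_j^n ȳ_n); j_n maximizes ‖z_n^j − x_n‖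 and z̄_n = z_n^{j_n}; C_{n+1} = {v ∈ C_n : ‖z̄_n − v‖² ≤ ‖x_n − v‖² + ε_n} with ε_n = (k_n − 1)(‖x_n‖ + ω)²; x_{n+1} = P_{C_{n+1}} x_0. Then {x_n} converges strongly to P_F x_0. -/

import Mathlib

open scoped RealInnerProductSpace
open Filter Topology

def IsProjOn {H : Type*} [NormedAddCommGroup H] (K : Set H) (x p : H) : Prop :=
  p ∈ K ∧ ∀ v ∈ K, ‖p - x‖ ≤ ‖v - x‖

section aux
variable {H : Type*} [NormedAddCommGroup H] [InnerProductSpace ℝ H]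

lemma aux_norm_combo (t : ℝ) (u v : H) :
    ‖t • u + (1 - t) • v‖ ^ 2
      = t * ‖u‖ ^ 2 + (1 - t) * ‖v‖ ^ 2 - t * (1 - t) * ‖u - v‖ ^ 2 := by
  have h : ∀ w : H, ‖w‖ ^ 2 = ⟪w, w⟫ := fun w => (real_inner_self_eq_norm_sq w).symm
  simp only [h, inner_add_left, inner_add_right, inner_sub_left, inner_sub_right,
    real_inner_smul_left, real_inner_smul_right, real_inner_comm v u]
  ring

lemma aux_sq_le {a b : ℝ} (ha : 0 ≤ a) (hb : 0 ≤ b) (h : a ^ 2 ≤ b ^ 2) : a ≤ b := by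
  nlinarith

lemma aux_isProjOn_inner {K : Set H} (hK : Convex ℝ K) {x p : H} (h : IsProjOn K x p)
    {v : H} (hv : v ∈ K) : ⟪x - p, v - p⟫ ≤ 0 := by
  have key : ∀ t : ℝ, 0 < t → t ≤ 1 → 2 * ⟪x - p, v - p⟫ ≤ t * ‖v - p‖ ^ 2 := by
    intro t ht0 ht1
    have hw : (1 - t) • p + t • v ∈ K := hK h.1 hv (by linarith) (by linarith) (by ring)
    have h2 := h.2 _ hw
    have hsq : ‖p - x‖ ^ 2 ≤ ‖(1 - t) • p + t • v - x‖ ^ 2 := by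
      nlinarith [norm_nonneg (p - x), norm_nonneg ((1 - t) • p + t • v - x)]
    have hrew : (1 - t) • p + t • v - x = (p - x) + t • (v - p) := by
      rw [sub_smul, one_smul, smul_sub]; abel
    rw [hrew, norm_add_sq_real, real_inner_smul_right, norm_smul] at hsq
    have h3 : 0 ≤ 2 * (t * ⟪p - x, v - p⟫) + (‖t‖ * ‖v - p‖) ^ 2 := by nlinarith
    have h4 : ⟪x - p, v - p⟫ = - ⟪p - x, v - p⟫ := by
      rw [← inner_neg_left]; norm_num
    rw [h4]
    rw [Real.norm_eq_abs, abs_of_pos ht0] at h3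
    nlinarith
  rcases le_or_gt ⟪x - p, v - p⟫ 0 with hc | hc
  · exact hc
  · exfalso
    have h1 := key 1 one_pos le_rfl
    have hvp : 0 < ‖v - p‖ ^ 2 := by nlinarith
    rcases le_or_gt (⟪x - p, v - p⟫ / ‖v - p‖ ^ 2) 1 with hle | hlt
    · have := key _ (div_pos hc hvp) hle
      rw [div_mul_cancel₀ _ (ne_of_gt hvp)] at this
      linarith
    · have : ‖v - p‖ ^ 2 < ⟪x - p, v - p⟫ := by
        rw [lt_div_iff₀ hvp] at hlt; linarith
      linarith

lemma aux_isProjOn_of_inner {K : Set H} {x p : H} (hp : p ∈ K)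
    (h : ∀ v ∈ K, ⟪x - p, v - p⟫ ≤ 0) : IsProjOn K x p := by
  refine ⟨hp, fun v hv => ?_⟩
  have h1 := h v hv
  have hrew : v - x = (v - p) + (p - x) := by abel
  have : ‖p - x‖ ^ 2 ≤ ‖v - x‖ ^ 2 := by
    rw [hrew, norm_add_sq_real]
    have : ⟪v - p, p - x⟫ = - ⟪x - p, v - p⟫ := by
      rw [real_inner_comm, ← inner_neg_left]; norm_num
    nlinarith [norm_nonneg (v - p)]
  exact aux_sq_le (norm_nonneg _) (norm_nonneg _) this

lemma aux_tendsto_of_sq {t : ℕ → ℝ} (h0 : ∀ n, 0 ≤ t n)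
    (h : Tendsto (fun n => (t n) ^ 2) atTop (nhds 0)) : Tendsto t atTop (nhds 0) := by
  have := (Real.continuous_sqrt.tendsto 0).comp h
  simp only [Function.comp_def, Real.sqrt_zero] at this
  convert this using 2 with n
  rw [Real.sqrt_sq (h0 n)]

lemma aux_quad {U W κ kk : ℝ} (hU : 0 ≤ U) (hW : 0 ≤ W) (hκ0 : 0 ≤ κ) (hκ1 : κ < 1)
    (hkk : 0 ≤ kk) (h : (1 - κ) * U ^ 2 ≤ 2 * κ * W * U + (kk + κ) * W ^ 2) :
    (1 - κ) * U ≤ (2 * κ + kk + 1) * W := by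
  by_contra hcon
  push_neg at hcon
  rcases eq_or_lt_of_le hW with hW0 | hW0
  · rw [← hW0] at h hcon
    nlinarith
  · have hUW : (kk + 1) * W ≤ U := by nlinarith
    have hU0 : 0 < U := by nlinarith
    nlinarith [mul_lt_mul_of_pos_right hcon hU0,
      mul_le_mul_of_nonneg_left hUW (mul_nonneg (by linarith : (0:ℝ) ≤ kk + 1) hW),
      mul_pos hW0 hW0, mul_nonneg hkk (le_of_lt (mul_pos hW0 hW0)),
      mul_nonneg (mul_nonneg hkk hkk) (le_of_lt (mul_pos hW0 hW0))]
end aux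

set_option maxHeartbeats 2000000 in
/-- **Corollary 3.1.** Parallel hybrid algorithm for a finite family of
equilibrium problems, variational inequalities and asymptotically κ-strictly
pseudocontractive mappings: `{xₙ}` converges strongly to `P_F x₀`. -/
theorem corollary31_strong_convergence
    {H : Type*} [NormedAddCommGroup H] [InnerProductSpace ℝ H] [CompleteSpace H]
    (C : Set H) (hCne : C.Nonempty) (hCcl : IsClosed C) (hCcv : Convex ℝ C)
    (N K M : ℕ) (hN : 0 < N) (hK : 0 < K) (hM : 0 < M)
    -- the bifunctions fᵢ satisfy (A1)-(A4)
    (f : Fin N → H → H → ℝ)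
    (hfA1 : ∀ i, ∀ x ∈ C, f i x x = 0)
    (hfA2 : ∀ i, ∀ x ∈ C, ∀ y ∈ C, f i x y + f i y x ≤ 0)
    (hfA3 : ∀ i, ∀ x ∈ C, ∀ y ∈ C, ∀ z ∈ C,
      Filter.limsup (fun t : ℝ => f i (t • z + (1 - t) • x) y) (nhdsWithin 0 (Set.Ioi 0))
        ≤ f i x y)
    (hfA4conv : ∀ i, ∀ x ∈ C, ConvexOn ℝ C (f i x))
    (hfA4lsc : ∀ i, ∀ x ∈ C, LowerSemicontinuousOn (f i x) C)
    -- the operators Aₖ are α-inverse strongly monotone on C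
    (A : Fin K → H → H) (α : ℝ) (hα : 0 < α)
    (hism : ∀ i, ∀ x ∈ C, ∀ y ∈ C, α * ‖A i x - A i y‖ ^ 2 ≤ ⟪A i x - A i y, x - y⟫)
    -- the mappings Sⱼ : C → C are asymptotically κ-strictly pseudocontractive with
    -- the same sequence {kₙ} ⊆ [1,∞), kₙ → 1
    (S : Fin M → H → H) (hS : ∀ j, Set.MapsTo (S j) C C)
    (κ : ℝ) (hκ0 : 0 ≤ κ) (hκ1 : κ < 1)
    (k : ℕ → ℝ) (hk1 : ∀ n, 1 ≤ k n)
    (hklim : Filter.Tendsto k Filter.atTop (nhds 1))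
    (hasym : ∀ j, ∀ n, 1 ≤ n → ∀ x ∈ C, ∀ y ∈ C,
      ‖(S j)^[n] x - (S j)^[n] y‖ ^ 2
        ≤ k n * ‖x - y‖ ^ 2 + κ * ‖(x - (S j)^[n] x) - (y - (S j)^[n] y)‖ ^ 2)
    -- the solution set F is nonempty and bounded by ω
    (F : Set H)
    (hF : F = {v ∈ C | ∀ i, ∀ y ∈ C, 0 ≤ f i v y} ∩
      {v ∈ C | ∀ i, ∀ y ∈ C, 0 ≤ ⟪A i v, y - v⟫} ∩ {v | ∀ j, S j v = v})
    (hFne : F.Nonempty) (ω : ℝ) (hω : 0 < ω) (hFb : ∀ v ∈ F, ‖v‖ ≤ ω)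
    -- control parameters
    (a : ℕ → ℝ) (ha0 : ∀ n, 0 < a n) (ha1 : ∀ n, a n < 1)
    (halimsup : Filter.limsup a Filter.atTop < 1)
    (β : ℕ → ℝ) (b : ℝ) (hbκ : κ < b) (hb1 : b < 1) (hβ : ∀ n, κ ≤ β n ∧ β n ≤ b)
    (r : ℕ → ℝ) (d e : ℝ) (hd : 0 < d) (he : e < 2 * α) (hr : ∀ n, d ≤ r n ∧ r n ≤ e)
    -- the iterates of Algorithm 1
    (x : ℕ → H) (yE : ℕ → Fin N → H) (yV : ℕ → Fin K → H) (z : ℕ → Fin M → H)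
    (jM : ℕ → Fin M) (ybar zbar : ℕ → H) (Cset : ℕ → Set H)
    (hx0 : x 0 ∈ C) (hC0 : Cset 0 = C)
    -- (i) yₙⁱ = T_{rₙ}^{fᵢ} xₙ for i = 1,…,N
    (hyE : ∀ n i, yE n i ∈ C ∧ ∀ w ∈ C,
      0 ≤ f i (yE n i) w + (1 / r n) * ⟪w - yE n i, yE n i - x n⟫)
    -- and yₙ^{N+k} = P_C (xₙ - rₙ Aₖ xₙ) for k = 1,…,K
    (hyV : ∀ n i, IsProjOn C (x n - r n • A i (x n)) (yV n i))
    -- (ii) ȳₙ is the furthest from xₙ among all yₙⁱ, i = 1,…,N+K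
    (hybar : ∀ n, ((∃ i, ybar n = yE n i) ∨ (∃ i, ybar n = yV n i)) ∧
      (∀ i, ‖yE n i - x n‖ ≤ ‖ybar n - x n‖) ∧
      (∀ i, ‖yV n i - x n‖ ≤ ‖ybar n - x n‖))
    -- (iii) zₙʲ = αₙ xₙ + (1-αₙ)(βₙ ȳₙ + (1-βₙ) Sⱼⁿ ȳₙ)
    (hz : ∀ n j, z n j = a n • x n +
      (1 - a n) • (β n • ybar n + (1 - β n) • (S j)^[n] (ybar n)))
    -- (iv) jₙ maximizes ‖zₙʲ - xₙ‖ and z̄ₙ = zₙ^{jₙ}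
    (hjM : ∀ n j, ‖z n j - x n‖ ≤ ‖z n (jM n) - x n‖)
    (hzbar : ∀ n, zbar n = z n (jM n))
    -- (v) Cₙ₊₁ = {v ∈ Cₙ : ‖z̄ₙ - v‖² ≤ ‖xₙ - v‖² + εₙ}, εₙ = (kₙ - 1)(‖xₙ‖ + ω)²
    (hCset : ∀ n, Cset (n + 1) =
      {v ∈ Cset n | ‖zbar n - v‖ ^ 2 ≤ ‖x n - v‖ ^ 2 + (k n - 1) * (‖x n‖ + ω) ^ 2})
    -- (vi) xₙ₊₁ = P_{Cₙ₊₁} x₀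
    (hxproj : ∀ n, IsProjOn (Cset (n + 1)) (x 0) (x (n + 1))) :
    ∃ p, IsProjOn F (x 0) p ∧ Filter.Tendsto x Filter.atTop (nhds p) := by
  classical
  have hr0 : ∀ n, 0 < r n := fun n => lt_of_lt_of_le hd (hr n).1
  have he0 : 0 < e := lt_of_lt_of_le (lt_of_lt_of_le hd (hr 0).1) (hr 0).2
  set c : ℝ := 1 - e / (2 * α) with hcdef
  have hc0 : 0 < c := by
    have h1 : e / (2 * α) < 1 := (div_lt_one (by linarith)).mpr he
    simp only [hcdef]; linarith
  have hc1 : c ≤ 1 := by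
    have h1 : 0 ≤ e / (2 * α) := div_nonneg he0.le (by linarith)
    simp only [hcdef]; linarith
  have hFmem : ∀ p ∈ F, p ∈ C ∧ (∀ i, ∀ y ∈ C, 0 ≤ f i p y) ∧
      (∀ i, ∀ y ∈ C, 0 ≤ ⟪A i p, y - p⟫) ∧ (∀ j, S j p = p) := by
    intro p hp
    rw [hF] at hp
    exact ⟨hp.1.1.1, hp.1.1.2, hp.1.2.2, hp.2⟩
  have hyEC : ∀ n i, yE n i ∈ C := fun n i => (hyE n i).1
  have hyVC : ∀ n i, yV n i ∈ C := fun n i => (hyV n i).1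
  have hybarC : ∀ n, ybar n ∈ C := by
    intro n
    rcases (hybar n).1 with ⟨i, hi⟩ | ⟨i, hi⟩
    · rw [hi]; exact hyEC n i
    · rw [hi]; exact hyVC n i
  have hCsub : ∀ n, Cset (n + 1) ⊆ Cset n := by
    intro n v hv; rw [hCset n] at hv; exact hv.1
  have hCsetC : ∀ n, Cset n ⊆ C := by
    intro n; induction n with
    | zero => rw [hC0]
    | succ m ih => exact fun v hv => ih (hCsub m hv)
  have hxC : ∀ n, x n ∈ C := by
    intro n; cases n with
    | zero => exact hx0
    | succ m => exact hCsetC (m + 1) (hxproj m).1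
  have haffine : ∀ n (u : H), ‖zbar n - u‖ ^ 2 - ‖x n - u‖ ^ 2
      = ‖zbar n‖ ^ 2 - ‖x n‖ ^ 2 - 2 * ⟪zbar n - x n, u⟫ := by
    intro n u
    rw [norm_sub_sq_real, norm_sub_sq_real, inner_sub_left]; ring
  have hCconv : ∀ n, Convex ℝ (Cset n) := by
    intro n; induction n with
    | zero => rw [hC0]; exact hCcv
    | succ m ih =>
      rw [hCset m]
      intro v hv w hw s t hs ht hst
      refine ⟨ih hv.1 hw.1 hs ht hst, ?_⟩
      have h1 : ‖zbar m - v‖ ^ 2 - ‖x m - v‖ ^ 2 ≤ (k m - 1) * (‖x m‖ + ω) ^ 2 := by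
        have := hv.2; linarith
      have h2 : ‖zbar m - w‖ ^ 2 - ‖x m - w‖ ^ 2 ≤ (k m - 1) * (‖x m‖ + ω) ^ 2 := by
        have := hw.2; linarith
      rw [haffine m v] at h1
      rw [haffine m w] at h2
      have h3 : ‖zbar m - (s • v + t • w)‖ ^ 2 - ‖x m - (s • v + t • w)‖ ^ 2
          ≤ (k m - 1) * (‖x m‖ + ω) ^ 2 := by
        rw [haffine m _, inner_add_right, real_inner_smul_right, real_inner_smul_right]
        have ht' : t = 1 - s := by linarith
        subst ht'
        have key := add_le_add (mul_le_mul_of_nonneg_left h1 hs)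
          (mul_le_mul_of_nonneg_left h2 ht)
        nlinarith [key]
      linarith
  -- bound for the equilibrium iterates
  have hyEbound : ∀ p ∈ F, ∀ n (i : Fin N),
      ‖yE n i - p‖ ^ 2 ≤ ‖x n - p‖ ^ 2 - ‖yE n i - x n‖ ^ 2 := by
    intro p hp n i
    obtain ⟨hpC, hpEP, -, -⟩ := hFmem p hp
    have h1 := (hyE n i).2 p hpC
    have h2 := hfA2 i (yE n i) (hyEC n i) p hpC
    have h3 := hpEP i (yE n i) (hyEC n i)
    have h5 : 0 ≤ (1 / r n) * ⟪p - yE n i, yE n i - x n⟫ := by linarith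
    have h4 : 0 ≤ ⟪p - yE n i, yE n i - x n⟫ := by
      have h4' := mul_nonneg (hr0 n).le h5
      field_simp [ne_of_gt (hr0 n)] at h4'
      exact h4'
    have hexp : x n - p = (x n - yE n i) + (yE n i - p) := by abel
    have h6 : ‖x n - p‖ ^ 2 = ‖x n - yE n i‖ ^ 2
        + 2 * ⟪x n - yE n i, yE n i - p⟫ + ‖yE n i - p‖ ^ 2 := by
      rw [hexp, norm_add_sq_real]
    have h7 : ⟪x n - yE n i, yE n i - p⟫ = ⟪p - yE n i, yE n i - x n⟫ := by
      rw [show x n - yE n i = -(yE n i - x n) by abel,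
        show yE n i - p = -(p - yE n i) by abel, inner_neg_neg, real_inner_comm]
    rw [h7] at h6
    have h8 : ‖x n - yE n i‖ = ‖yE n i - x n‖ := norm_sub_rev _ _
    rw [h8] at h6
    linarith
  -- bound for the variational inequality iterates
  have hyVbound : ∀ p ∈ F, ∀ n (i : Fin K),
      ‖yV n i - p‖ ^ 2 ≤ ‖x n - p‖ ^ 2 - c * ‖yV n i - x n‖ ^ 2 := by
    intro p hp n i
    obtain ⟨hpC, -, hpVI, -⟩ := hFmem p hp
    set y := yV n i with hy
    set D := A i (x n) - A i p with hD
    set G := (x n - p) - r n • D with hG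
    set E := (x n - y) - r n • D with hE
    have hchar1 : ⟪(x n - r n • A i (x n)) - y, p - y⟫ ≤ 0 :=
      aux_isProjOn_inner hCcv (hyV n i) hpC
    have hchar2 : ⟪(p - r n • A i p) - p, y - p⟫ ≤ 0 := by
      have hrw : (p - r n • A i p) - p = -(r n • A i p) := by abel
      rw [hrw, inner_neg_left, real_inner_smul_left]
      have h0 := hpVI i y (hyVC n i)
      nlinarith [hr0 n]
    have hGrew : G - (y - p) = ((x n - r n • A i (x n)) - y) - ((p - r n • A i p) - p) := by
      simp only [hG, hD, smul_sub]; abel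
    have h5 : 0 ≤ ⟪G - (y - p), y - p⟫ := by
      rw [hGrew, inner_sub_left]
      have h1' : ⟪(x n - r n • A i (x n)) - y, y - p⟫
          = -⟪(x n - r n • A i (x n)) - y, p - y⟫ := by
        rw [show y - p = -(p - y) by abel, inner_neg_right]
      linarith [hchar1, hchar2, h1'.ge, h1'.le]
    have hip : ‖y - p‖ ^ 2 ≤ ⟪G, y - p⟫ := by
      rw [inner_sub_left, real_inner_self_eq_norm_sq] at h5
      linarith
    have hEeq : E = G - (y - p) := by simp only [hE, hG]; abel
    have hE2 : ‖E‖ ^ 2 = ‖G‖ ^ 2 - 2 * ⟪G, y - p⟫ + ‖y - p‖ ^ 2 := by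
      rw [hEeq, norm_sub_sq_real]
    have step1 : ‖y - p‖ ^ 2 ≤ ‖G‖ ^ 2 - ‖E‖ ^ 2 := by linarith
    have hsm : ‖r n • D‖ ^ 2 = (r n) ^ 2 * ‖D‖ ^ 2 := by
      rw [norm_smul, mul_pow, Real.norm_eq_abs, sq_abs]
    have hG2 : ‖G‖ ^ 2 = ‖x n - p‖ ^ 2 - 2 * (r n * ⟪x n - p, D⟫) + (r n) ^ 2 * ‖D‖ ^ 2 := by
      rw [hG, norm_sub_sq_real, real_inner_smul_right, hsm]
    have hE2' : ‖E‖ ^ 2 = ‖x n - y‖ ^ 2 - 2 * (r n * ⟪x n - y, D⟫) + (r n) ^ 2 * ‖D‖ ^ 2 := by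
      rw [hE, norm_sub_sq_real, real_inner_smul_right, hsm]
    have hF4 : α * ‖D‖ ^ 2 ≤ ⟪x n - p, D⟫ := by
      have := hism i (x n) (hxC n) p hpC
      rwa [real_inner_comm] at this
    have hF5 : ⟪x n - y, D⟫ ≤ ‖x n - y‖ * ‖D‖ := real_inner_le_norm _ _
    have step2 : ‖y - p‖ ^ 2 ≤ ‖x n - p‖ ^ 2 - ‖x n - y‖ ^ 2
        - 2 * α * r n * ‖D‖ ^ 2 + 2 * r n * (‖x n - y‖ * ‖D‖) := by
      linarith [step1, hG2, hE2',
        mul_le_mul_of_nonneg_left hF4 (by linarith [hr0 n] : (0:ℝ) ≤ 2 * r n),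
        mul_le_mul_of_nonneg_left hF5 (by linarith [hr0 n] : (0:ℝ) ≤ 2 * r n)]
    -- AM-GM step
    have step4 : 2 * r n * (‖x n - y‖ * ‖D‖)
        ≤ (e / (2 * α)) * ‖x n - y‖ ^ 2 + 2 * α * r n * ‖D‖ ^ 2 := by
      have hpos : (0:ℝ) < 2 * α * e := by positivity
      have hmul : (2 * α * e) * (2 * r n * (‖x n - y‖ * ‖D‖))
          ≤ (2 * α * e) * ((e / (2 * α)) * ‖x n - y‖ ^ 2 + 2 * α * r n * ‖D‖ ^ 2) := by
        have hrhs : (2 * α * e) * ((e / (2 * α)) * ‖x n - y‖ ^ 2 + 2 * α * r n * ‖D‖ ^ 2)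
            = e ^ 2 * ‖x n - y‖ ^ 2 + 4 * α ^ 2 * e * (r n) * ‖D‖ ^ 2 := by
          field_simp; ring
        rw [hrhs]
        have hsq := sq_nonneg (e * ‖x n - y‖ - 2 * α * r n * ‖D‖)
        have hre : (0:ℝ) ≤ (e - r n) * (r n * ‖D‖ ^ 2) :=
          mul_nonneg (sub_nonneg.mpr (hr n).2) (mul_nonneg (hr0 n).le (sq_nonneg _))
        linarith [hsq, mul_nonneg (by positivity : (0:ℝ) ≤ 4 * α ^ 2) hre]
      exact le_of_mul_le_mul_left hmul hpos
    have hfinal : ‖y - p‖ ^ 2 ≤ ‖x n - p‖ ^ 2 - c * ‖x n - y‖ ^ 2 := by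
      simp only [hcdef]; linarith [step2, step4]
    rw [norm_sub_rev (x n) y] at hfinal
    exact hfinal
  have hybarBound : ∀ p ∈ F, ∀ n,
      ‖ybar n - p‖ ^ 2 ≤ ‖x n - p‖ ^ 2 - c * ‖ybar n - x n‖ ^ 2 := by
    intro p hp n
    rcases (hybar n).1 with ⟨i, hi⟩ | ⟨i, hi⟩
    · rw [hi]
      have h1 := hyEbound p hp n i
      linarith [mul_nonneg (by linarith : (0:ℝ) ≤ 1 - c) (sq_nonneg ‖yE n i - x n‖)]
    · rw [hi]; exact hyVbound p hp n i
  have hSfix : ∀ p ∈ F, ∀ (j : Fin M) n, (S j)^[n] p = p := fun p hp j n =>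
    Function.iterate_fixed ((hFmem p hp).2.2.2 j) n
  have hcvx : ∀ (s : ℝ) (u v w : H), s • (u - w) + (1 - s) • (v - w)
      = (s • u + (1 - s) • v) - w := by
    intro s u v w
    rw [smul_sub, smul_sub, sub_smul, sub_smul, one_smul, one_smul]; abel
  have hzBound : ∀ p ∈ F, ∀ n (j : Fin M),
      ‖z n j - p‖ ^ 2 ≤ k n * ‖x n - p‖ ^ 2 - (1 - a n) * c * ‖ybar n - x n‖ ^ 2 := by
    intro p hp n j
    set t := β n • ybar n + (1 - β n) • (S j)^[n] (ybar n) with hT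
    have hzp : z n j - p = a n • (x n - p) + (1 - a n) • (t - p) := by
      rw [hz n j, ← hT, hcvx]
    have hcombo1 : ‖z n j - p‖ ^ 2 = a n * ‖x n - p‖ ^ 2 + (1 - a n) * ‖t - p‖ ^ 2
        - a n * (1 - a n) * ‖(x n - p) - (t - p)‖ ^ 2 := by
      rw [hzp]; exact aux_norm_combo _ _ _
    have hcombo2 : ‖t - p‖ ^ 2 = β n * ‖ybar n - p‖ ^ 2
        + (1 - β n) * ‖(S j)^[n] (ybar n) - p‖ ^ 2
        - β n * (1 - β n) * ‖ybar n - (S j)^[n] (ybar n)‖ ^ 2 := by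
      have h := aux_norm_combo (β n) (ybar n - p) ((S j)^[n] (ybar n) - p)
      rw [hcvx, ← hT] at h
      rw [show (ybar n - p) - ((S j)^[n] (ybar n) - p) = ybar n - (S j)^[n] (ybar n) from
        by abel] at h
      exact h
    have hyb := hybarBound p hp n
    have hβ1 : (0:ℝ) ≤ 1 - β n := by linarith [(hβ n).2]
    have hβ0 : (0:ℝ) ≤ β n := by linarith [(hβ n).1]
    have ha1' : (0:ℝ) ≤ 1 - a n := by linarith [ha1 n]
    have hT2 : ‖t - p‖ ^ 2 ≤ k n * ‖ybar n - p‖ ^ 2 := by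
      rcases Nat.eq_zero_or_pos n with hn0 | hn1
      · subst hn0
        simp only [Function.iterate_zero_apply] at hcombo2
        have hd0 : ybar 0 - ybar 0 = 0 := sub_self _
        rw [hd0] at hcombo2
        simp only [norm_zero] at hcombo2
        nlinarith [hk1 0, sq_nonneg ‖ybar 0 - p‖, hcombo2]
      · have hS' := hasym j n hn1 (ybar n) (hybarC n) p (hFmem p hp).1
        rw [hSfix p hp j n] at hS'
        simp only [sub_self, sub_zero] at hS'
        linarith [hcombo2, mul_le_mul_of_nonneg_left hS' hβ1,
          mul_nonneg (mul_nonneg hβ1 (by linarith [(hβ n).1] : (0:ℝ) ≤ β n - κ))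
            (sq_nonneg ‖ybar n - (S j)^[n] (ybar n)‖),
          mul_nonneg (mul_nonneg (by linarith [hk1 n] : (0:ℝ) ≤ k n - 1) hβ0)
            (sq_nonneg ‖ybar n - p‖)]
    have h1 := mul_le_mul_of_nonneg_left hT2 ha1'
    have h2 := mul_le_mul_of_nonneg_left hyb
      (mul_nonneg ha1' (by linarith [hk1 n] : (0:ℝ) ≤ k n))
    have h3 := mul_nonneg (mul_nonneg (by linarith [hk1 n] : (0:ℝ) ≤ k n - 1)
      (ha0 n).le) (sq_nonneg ‖x n - p‖)
    have h4 := mul_nonneg (mul_nonneg (mul_nonneg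
      (by linarith [hk1 n] : (0:ℝ) ≤ k n - 1) ha1') hc0.le) (sq_nonneg ‖ybar n - x n‖)
    have h5 := mul_nonneg (mul_nonneg (ha0 n).le ha1')
      (sq_nonneg ‖(x n - p) - (t - p)‖)
    nlinarith [hcombo1, h1, h2, h3, h4, h5]
  have hFC : ∀ p ∈ F, ∀ n, p ∈ Cset n := by
    intro p hp n
    induction n with
    | zero => rw [hC0]; exact (hFmem p hp).1
    | succ m ih =>
      rw [hCset m]
      refine ⟨ih, ?_⟩
      have h1 := hzBound p hp m (jM m)
      rw [← hzbar m] at h1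
      have h2 : ‖x m - p‖ ≤ ‖x m‖ + ω :=
        le_trans (norm_sub_le _ _) (by linarith [hFb p hp])
      have h3 : ‖x m - p‖ ^ 2 ≤ (‖x m‖ + ω) ^ 2 := by
        nlinarith [norm_nonneg (x m - p)]
      have h4 : (0:ℝ) ≤ (1 - a m) * c * ‖ybar m - x m‖ ^ 2 :=
        mul_nonneg (mul_nonneg (by linarith [ha1 m]) hc0.le) (sq_nonneg _)
      linarith [h1, h4,
        mul_le_mul_of_nonneg_left h3 (by linarith [hk1 m] : (0:ℝ) ≤ k m - 1)]
  -- monotonicity and boundedness of ‖xₙ - x₀‖, hence Cauchy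
  obtain ⟨p0, hp0⟩ := hFne
  have hCanti : Antitone Cset := antitone_nat_of_succ_le hCsub
  have hmono : Monotone (fun n => ‖x n - x 0‖) := by
    apply monotone_nat_of_le_succ
    intro n
    cases n with
    | zero => simp
    | succ m => exact (hxproj m).2 _ (hCsub (m + 1) (hxproj (m + 1)).1)
  have hbdd : ∀ n, ‖x n - x 0‖ ≤ ‖p0 - x 0‖ := by
    intro n
    cases n with
    | zero => simp
    | succ m => exact (hxproj m).2 p0 (hFC p0 hp0 (m + 1))
  obtain ⟨lρ, hlρ⟩ : ∃ lρ, Tendsto (fun n => ‖x n - x 0‖) atTop (nhds lρ) :=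
    ⟨_, tendsto_atTop_ciSup hmono ⟨‖p0 - x 0‖, by rintro v ⟨n, rfl⟩; exact hbdd n⟩⟩
  have hsqconv : Tendsto (fun n => ‖x n - x 0‖ ^ 2) atTop (nhds (lρ ^ 2)) := hlρ.pow 2
  have hcauchy : CauchySeq x := by
    rw [Metric.cauchySeq_iff']
    intro ε hε
    have hc2 : CauchySeq (fun n => ‖x n - x 0‖ ^ 2) := hsqconv.cauchySeq
    rw [Metric.cauchySeq_iff] at hc2
    obtain ⟨Nq, hNq⟩ := hc2 (ε ^ 2 / 2) (by positivity)
    refine ⟨Nq + 1, fun n hn => ?_⟩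
    obtain ⟨m, rfl⟩ : ∃ m, n = m + 1 := ⟨n - 1, by omega⟩
    have hxn : x (m + 1) ∈ Cset (Nq + 1) := hCanti hn (hxproj m).1
    have hmid : (1/2 : ℝ) • x (m + 1) + (1 - 1/2 : ℝ) • x (Nq + 1) ∈ Cset (Nq + 1) :=
      hCconv (Nq + 1) hxn (hxproj Nq).1 (by norm_num) (by norm_num) (by norm_num)
    have hproj := (hxproj Nq).2 _ hmid
    have hmid2 : (1/2 : ℝ) • x (m + 1) + (1 - 1/2 : ℝ) • x (Nq + 1) - x 0
        = (1/2 : ℝ) • (x (m + 1) - x 0) + (1 - 1/2 : ℝ) • (x (Nq + 1) - x 0) := by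
      rw [hcvx]
    have hcombo := aux_norm_combo (1/2 : ℝ) (x (m + 1) - x 0) (x (Nq + 1) - x 0)
    rw [← hmid2] at hcombo
    have hdd : (x (m + 1) - x 0) - (x (Nq + 1) - x 0) = x (m + 1) - x (Nq + 1) := by abel
    rw [hdd] at hcombo
    have hprojsq : ‖x (Nq + 1) - x 0‖ ^ 2
        ≤ ‖(1/2 : ℝ) • x (m + 1) + (1 - 1/2 : ℝ) • x (Nq + 1) - x 0‖ ^ 2 := by
      nlinarith [norm_nonneg (x (Nq + 1) - x 0),
        norm_nonneg ((1/2 : ℝ) • x (m + 1) + (1 - 1/2 : ℝ) • x (Nq + 1) - x 0)]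
    have hdist := hNq (m + 1) (by omega) (Nq + 1) (by omega)
    rw [Real.dist_eq] at hdist
    have habs : ‖x (m + 1) - x 0‖ ^ 2 - ‖x (Nq + 1) - x 0‖ ^ 2 < ε ^ 2 / 2 :=
      lt_of_le_of_lt (le_abs_self _) hdist
    have hsq : ‖x (m + 1) - x (Nq + 1)‖ ^ 2 < ε ^ 2 := by nlinarith
    rw [dist_eq_norm]
    nlinarith [norm_nonneg (x (m + 1) - x (Nq + 1))]
  obtain ⟨q, hq⟩ := cauchySeq_tendsto_of_complete hcauchy
  have hqC : q ∈ C := hCcl.mem_of_tendsto hq (Filter.Eventually.of_forall hxC)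
  have hq' : Tendsto (fun n => x (n + 1)) atTop (nhds q) :=
    hq.comp (tendsto_add_atTop_nat 1)
  -- εₙ → 0
  have hεlim : Tendsto (fun n => (k n - 1) * (‖x n‖ + ω) ^ 2) atTop (nhds 0) := by
    have h1 : Tendsto (fun n => k n - 1) atTop (nhds 0) := by
      have := hklim.sub_const 1
      simpa using this
    have h2 : Tendsto (fun n => (‖x n‖ + ω) ^ 2) atTop (nhds ((‖q‖ + ω) ^ 2)) :=
      ((hq.norm).add_const ω).pow 2
    have := h1.mul h2
    simpa using this
  -- ‖z̄ₙ - xₙ₊₁‖ → 0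
  have hzx1 : Tendsto (fun n => ‖zbar n - x (n + 1)‖) atTop (nhds 0) := by
    apply aux_tendsto_of_sq (fun n => norm_nonneg _)
    have hub : ∀ n, ‖zbar n - x (n + 1)‖ ^ 2
        ≤ ‖x n - x (n + 1)‖ ^ 2 + (k n - 1) * (‖x n‖ + ω) ^ 2 := by
      intro n
      have hm := (hxproj n).1
      rw [hCset n] at hm
      exact hm.2
    have hlim : Tendsto (fun n => ‖x n - x (n + 1)‖ ^ 2 + (k n - 1) * (‖x n‖ + ω) ^ 2)
        atTop (nhds 0) := by
      have h1 : Tendsto (fun n => ‖x n - x (n + 1)‖) atTop (nhds 0) := by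
        have := (hq.sub hq').norm
        simpa using this
      have := (h1.pow 2).add hεlim
      simpa using this
    exact squeeze_zero (fun n => sq_nonneg _) hub hlim
  have hzbq : Tendsto zbar atTop (nhds q) := by
    have h1 : Tendsto (fun n => zbar n - x (n + 1)) atTop (nhds 0) :=
      tendsto_zero_iff_norm_tendsto_zero.mpr hzx1
    have := h1.add hq'
    simpa using this
  -- eventually aₙ is bounded away from 1
  set δ : ℝ := (1 - Filter.limsup a Filter.atTop) / 2 with hδdef
  have hδ0 : 0 < δ := by simp only [hδdef]; linarith
  have haev : ∀ᶠ n in atTop, 1 - a n ≥ δ := by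
    have hbd : Filter.IsBoundedUnder (· ≤ ·) atTop a :=
      ⟨1, Filter.eventually_map.2 (Filter.Eventually.of_forall fun n => (ha1 n).le)⟩
    have h1 : ∀ᶠ n in atTop, a n < Filter.limsup a Filter.atTop + δ := by
      apply Filter.eventually_lt_of_limsup_lt _ hbd
      linarith
    filter_upwards [h1] with n hn
    have : Filter.limsup a Filter.atTop + 2 * δ = 1 := by simp only [hδdef]; ring
    linarith
  -- ‖ȳₙ - xₙ‖ → 0
  have hybx : Tendsto (fun n => ‖ybar n - x n‖) atTop (nhds 0) := by
    apply aux_tendsto_of_sq (fun n => norm_nonneg _)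
    have hg : Tendsto (fun n => (k n * ‖x n - p0‖ ^ 2 - ‖zbar n - p0‖ ^ 2) / (c * δ))
        atTop (nhds 0) := by
      have h1 : Tendsto (fun n => ‖x n - p0‖ ^ 2) atTop (nhds (‖q - p0‖ ^ 2)) :=
        ((hq.sub_const p0).norm).pow 2
      have h2 : Tendsto (fun n => ‖zbar n - p0‖ ^ 2) atTop (nhds (‖q - p0‖ ^ 2)) :=
        ((hzbq.sub_const p0).norm).pow 2
      have h3 : Tendsto (fun n => k n * ‖x n - p0‖ ^ 2 - ‖zbar n - p0‖ ^ 2)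
          atTop (nhds (1 * ‖q - p0‖ ^ 2 - ‖q - p0‖ ^ 2)) := (hklim.mul h1).sub h2
      have h4 := h3.div_const (c * δ)
      simp only [one_mul, sub_self, zero_div] at h4
      exact h4
    apply squeeze_zero' (g := fun n => (k n * ‖x n - p0‖ ^ 2 - ‖zbar n - p0‖ ^ 2) / (c * δ))
      (Filter.Eventually.of_forall fun n => sq_nonneg _) _ hg
    filter_upwards [haev] with n hn
    have hzb := hzBound p0 hp0 n (jM n)
    rw [← hzbar n] at hzb
    have h5 : c * δ * ‖ybar n - x n‖ ^ 2 ≤ k n * ‖x n - p0‖ ^ 2 - ‖zbar n - p0‖ ^ 2 := by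
      nlinarith [mul_nonneg hc0.le (sq_nonneg ‖ybar n - x n‖)]
    rw [le_div_iff₀ (by positivity)]
    linarith
  have hybq : Tendsto ybar atTop (nhds q) := by
    have h1 : Tendsto (fun n => ybar n - x n) atTop (nhds 0) :=
      tendsto_zero_iff_norm_tendsto_zero.mpr hybx
    have := h1.add hq
    simpa using this
  -- yE, yV → q
  have hyEq : ∀ i, Tendsto (fun n => yE n i) atTop (nhds q) := by
    intro i
    have h1 : Tendsto (fun n => ‖yE n i - x n‖) atTop (nhds 0) :=
      squeeze_zero (fun n => norm_nonneg _) (fun n => (hybar n).2.1 i) hybx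
    have h2 : Tendsto (fun n => yE n i - x n) atTop (nhds 0) :=
      tendsto_zero_iff_norm_tendsto_zero.mpr h1
    have := h2.add hq
    simpa using this
  have hyVq : ∀ i, Tendsto (fun n => yV n i) atTop (nhds q) := by
    intro i
    have h1 : Tendsto (fun n => ‖yV n i - x n‖) atTop (nhds 0) :=
      squeeze_zero (fun n => norm_nonneg _) (fun n => (hybar n).2.2 i) hybx
    have h2 : Tendsto (fun n => yV n i - x n) atTop (nhds 0) :=
      tendsto_zero_iff_norm_tendsto_zero.mpr h1
    have := h2.add hq
    simpa using this
  -- ‖Sⱼⁿ ȳₙ - ȳₙ‖ → 0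
  have hzbx : Tendsto (fun n => ‖zbar n - x n‖) atTop (nhds 0) := by
    have := (hzbq.sub hq).norm
    simpa using this
  have hSny : ∀ j : Fin M, Tendsto (fun n => ‖(S j)^[n] (ybar n) - ybar n‖) atTop (nhds 0) := by
    intro j
    set tj : ℕ → H := fun n => β n • ybar n + (1 - β n) • (S j)^[n] (ybar n) with htjdef
    have hzjx : Tendsto (fun n => ‖z n j - x n‖) atTop (nhds 0) :=
      squeeze_zero (fun n => norm_nonneg _)
        (fun n => by rw [hzbar n]; exact hjM n j) hzbx
    have hzt : ∀ n, z n j - x n = (1 - a n) • (tj n - x n) := by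
      intro n
      rw [hz n j]
      have h1 := hcvx (a n) (x n) (tj n) (x n)
      rw [sub_self, smul_zero, zero_add] at h1
      exact h1.symm
    have hznorm : ∀ n, ‖z n j - x n‖ = (1 - a n) * ‖tj n - x n‖ := by
      intro n
      rw [hzt n, norm_smul, Real.norm_eq_abs, abs_of_nonneg (by linarith [ha1 n])]
    have htx : Tendsto (fun n => ‖tj n - x n‖) atTop (nhds 0) := by
      apply squeeze_zero' (Filter.Eventually.of_forall fun n => norm_nonneg _)
        _ (by simpa using hzjx.div_const δ)
      filter_upwards [haev] with n hn
      rw [le_div_iff₀ hδ0]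
      nlinarith [hznorm n, norm_nonneg (tj n - x n), hn]
    have hnorm2 : ∀ n, (1 - β n) * ‖(S j)^[n] (ybar n) - ybar n‖ = ‖tj n - ybar n‖ := by
      intro n
      have h1 := hcvx (β n) (ybar n) ((S j)^[n] (ybar n)) (ybar n)
      rw [sub_self, smul_zero, zero_add] at h1
      rw [← h1, norm_smul, Real.norm_eq_abs, abs_of_nonneg (by linarith [(hβ n).2])]
    apply squeeze_zero' (Filter.Eventually.of_forall fun n => norm_nonneg _)
      _ (by simpa using (htx.add hybx).div_const (1 - b))
    filter_upwards with n
    rw [le_div_iff₀ (by linarith : (0:ℝ) < 1 - b)]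
    have htri : ‖tj n - ybar n‖ ≤ ‖tj n - x n‖ + ‖ybar n - x n‖ := by
      have h2 : tj n - ybar n = (tj n - x n) - (ybar n - x n) := by abel
      rw [h2]; exact norm_sub_le _ _
    nlinarith [hnorm2 n, norm_nonneg ((S j)^[n] (ybar n) - ybar n), (hβ n).2]
  have hSnq : ∀ j : Fin M, Tendsto (fun n => (S j)^[n] (ybar n)) atTop (nhds q) := by
    intro j
    have h1 : Tendsto (fun n => (S j)^[n] (ybar n) - ybar n) atTop (nhds 0) :=
      tendsto_zero_iff_norm_tendsto_zero.mpr (hSny j)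
    have := h1.add hybq
    simpa using this
  -- q is a fixed point of each Sⱼ
  have hqS : ∀ j : Fin M, S j q = q := by
    intro j
    have hk2 : ∀ᶠ n in atTop, k n < 2 := hklim.eventually_lt_const (by norm_num)
    have hk2' : ∀ᶠ n in atTop, k (n + 1) < 2 := (tendsto_add_atTop_nat 1).eventually hk2
    have hLip : ∀ n, 1 ≤ n → ∀ u ∈ C, ∀ v ∈ C,
        (1 - κ) * ‖(S j)^[n] u - (S j)^[n] v‖ ≤ (2 * κ + k n + 1) * ‖u - v‖ := by
      intro n hn u hu v hv
      have h1 := hasym j n hn u hu v hv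
      have h2 : ‖(u - (S j)^[n] u) - (v - (S j)^[n] v)‖
          ≤ ‖u - v‖ + ‖(S j)^[n] u - (S j)^[n] v‖ := by
        have h3 : (u - (S j)^[n] u) - (v - (S j)^[n] v)
            = (u - v) - ((S j)^[n] u - (S j)^[n] v) := by abel
        rw [h3]; exact norm_sub_le _ _
      apply aux_quad (norm_nonneg _) (norm_nonneg _) hκ0 hκ1 (by linarith [hk1 n])
      nlinarith [h1, mul_self_le_mul_self (norm_nonneg ((u - (S j)^[n] u) - (v - (S j)^[n] v))) h2,
        norm_nonneg ((S j)^[n] u - (S j)^[n] v), norm_nonneg (u - v), hκ0]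
    have hmemS : ∀ n, (S j)^[n] (ybar n) ∈ C := fun n => ((hS j).iterate n) (hybarC n)
    have hSq1 : ∀ u ∈ C, (1 - κ) * ‖S j u - S j q‖ ≤ (2 * κ + k 1 + 1) * ‖u - q‖ := by
      intro u hu
      have h1 := hLip 1 le_rfl u hu q hqC
      simpa using h1
    set g : ℕ → ℝ := fun n => (2 * κ + k 1 + 1) * ‖(S j)^[n] (ybar n) - q‖
      + (2 * κ + 3) * ‖ybar n - ybar (n + 1)‖
      + (1 - κ) * (‖(S j)^[n + 1] (ybar (n + 1)) - ybar (n + 1)‖ + ‖ybar (n + 1) - q‖)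
      with hgdef
    have hg0 : Tendsto g atTop (nhds 0) := by
      have t1 : Tendsto (fun n => ‖(S j)^[n] (ybar n) - q‖) atTop (nhds 0) := by
        have := ((hSnq j).sub (tendsto_const_nhds (x := q))).norm
        simpa using this
      have t2 : Tendsto (fun n => ‖ybar n - ybar (n + 1)‖) atTop (nhds 0) := by
        have := (hybq.sub (hybq.comp (tendsto_add_atTop_nat 1))).norm
        simpa using this
      have t3 : Tendsto (fun n => ‖(S j)^[n + 1] (ybar (n + 1)) - ybar (n + 1)‖)
          atTop (nhds 0) := (hSny j).comp (tendsto_add_atTop_nat 1)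
      have t4 : Tendsto (fun n => ‖ybar (n + 1) - q‖) atTop (nhds 0) := by
        have := ((hybq.comp (tendsto_add_atTop_nat 1)).sub (tendsto_const_nhds (x := q))).norm
        simpa using this
      have := ((t1.const_mul (2 * κ + k 1 + 1)).add (t2.const_mul (2 * κ + 3))).add
        ((t3.add t4).const_mul (1 - κ))
      simp only [mul_zero, add_zero] at this
      exact this
    have hkey : ∀ᶠ n in atTop, (1 - κ) * ‖S j q - q‖ ≤ g n := by
      filter_upwards [hk2'] with n hkn
      have e1 := hSq1 _ (hmemS n)
      rw [← Function.iterate_succ_apply' (S j) n (ybar n)] at e1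
      have e3 := hLip (n + 1) (by omega) (ybar n) (hybarC n) (ybar (n + 1)) (hybarC (n + 1))
      have tri : ‖S j q - q‖ ≤ ‖(S j)^[n + 1] (ybar n) - S j q‖
          + ‖(S j)^[n + 1] (ybar n) - (S j)^[n + 1] (ybar (n + 1))‖
          + ‖(S j)^[n + 1] (ybar (n + 1)) - ybar (n + 1)‖ + ‖ybar (n + 1) - q‖ := by
        have h4 : S j q - q = -((S j)^[n + 1] (ybar n) - S j q)
            + ((S j)^[n + 1] (ybar n) - (S j)^[n + 1] (ybar (n + 1)))
            + ((S j)^[n + 1] (ybar (n + 1)) - ybar (n + 1)) + (ybar (n + 1) - q) := by abel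
        calc ‖S j q - q‖ = ‖(-((S j)^[n + 1] (ybar n) - S j q)
            + ((S j)^[n + 1] (ybar n) - (S j)^[n + 1] (ybar (n + 1)))
            + ((S j)^[n + 1] (ybar (n + 1)) - ybar (n + 1))) + (ybar (n + 1) - q)‖ := by
              rw [← h4]
          _ ≤ ‖-((S j)^[n + 1] (ybar n) - S j q)
            + ((S j)^[n + 1] (ybar n) - (S j)^[n + 1] (ybar (n + 1)))
            + ((S j)^[n + 1] (ybar (n + 1)) - ybar (n + 1))‖ + ‖ybar (n + 1) - q‖ :=
              norm_add_le _ _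
          _ ≤ ‖-((S j)^[n + 1] (ybar n) - S j q)
            + ((S j)^[n + 1] (ybar n) - (S j)^[n + 1] (ybar (n + 1)))‖
            + ‖(S j)^[n + 1] (ybar (n + 1)) - ybar (n + 1)‖ + ‖ybar (n + 1) - q‖ := by
              linarith [norm_add_le (-((S j)^[n + 1] (ybar n) - S j q)
                + ((S j)^[n + 1] (ybar n) - (S j)^[n + 1] (ybar (n + 1))))
                ((S j)^[n + 1] (ybar (n + 1)) - ybar (n + 1))]
          _ ≤ ‖-((S j)^[n + 1] (ybar n) - S j q)‖
            + ‖(S j)^[n + 1] (ybar n) - (S j)^[n + 1] (ybar (n + 1))‖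
            + ‖(S j)^[n + 1] (ybar (n + 1)) - ybar (n + 1)‖ + ‖ybar (n + 1) - q‖ := by
              linarith [norm_add_le (-((S j)^[n + 1] (ybar n) - S j q))
                ((S j)^[n + 1] (ybar n) - (S j)^[n + 1] (ybar (n + 1)))]
          _ = ‖(S j)^[n + 1] (ybar n) - S j q‖
            + ‖(S j)^[n + 1] (ybar n) - (S j)^[n + 1] (ybar (n + 1))‖
            + ‖(S j)^[n + 1] (ybar (n + 1)) - ybar (n + 1)‖ + ‖ybar (n + 1) - q‖ := by
              rw [norm_neg]
      have hmul := mul_le_mul_of_nonneg_left tri (by linarith : (0:ℝ) ≤ 1 - κ)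
      have e1' : (1 - κ) * ‖(S j)^[n + 1] (ybar n) - S j q‖
          ≤ (2 * κ + k 1 + 1) * ‖(S j)^[n] (ybar n) - q‖ := by
        exact e1
      have e3' : (1 - κ) * ‖(S j)^[n + 1] (ybar n) - (S j)^[n + 1] (ybar (n + 1))‖
          ≤ (2 * κ + 3) * ‖ybar n - ybar (n + 1)‖ := by
        refine e3.trans ?_
        have := norm_nonneg (ybar n - ybar (n + 1))
        nlinarith
      simp only [hgdef]
      nlinarith [hmul, e1', e3']
    have hfin : (1 - κ) * ‖S j q - q‖ ≤ 0 := ge_of_tendsto hg0 hkey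
    have : ‖S j q - q‖ = 0 := le_antisymm (by nlinarith [norm_nonneg (S j q - q)]) (norm_nonneg _)
    rwa [norm_eq_zero, sub_eq_zero] at this
  -- q solves the variational inequalities
  have hqVI : ∀ i : Fin K, ∀ w ∈ C, 0 ≤ ⟪A i q, w - q⟫ := by
    intro i w hw
    have hALip : ∀ n, α * ‖A i (x n) - A i q‖ ≤ ‖x n - q‖ := by
      intro n
      have h1 := hism i (x n) (hxC n) q hqC
      have h2 := real_inner_le_norm (A i (x n) - A i q) (x n - q)
      rcases eq_or_lt_of_le (norm_nonneg (A i (x n) - A i q)) with hs0 | hs0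
      · rw [← hs0, mul_zero]; exact norm_nonneg _
      · nlinarith [h1, h2, hs0]
    have hAq : Tendsto (fun n => A i (x n)) atTop (nhds (A i q)) := by
      have h1 : Tendsto (fun n => ‖A i (x n) - A i q‖) atTop (nhds 0) := by
        apply squeeze_zero (fun n => norm_nonneg _) (fun n => ?_)
          (by simpa using ((hq.sub_const q).norm.div_const α))
        rw [le_div_iff₀ hα]
        linarith [hALip n]
      have h2 : Tendsto (fun n => A i (x n) - A i q) atTop (nhds 0) :=
        tendsto_zero_iff_norm_tendsto_zero.mpr h1
      have := h2.add (tendsto_const_nhds (x := A i q))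
      simpa using this
    have hLHS : Tendsto (fun n => ⟪A i (x n), w - yV n i⟫) atTop (nhds ⟪A i q, w - q⟫) :=
      hAq.inner ((tendsto_const_nhds (x := w)).sub (hyVq i))
    have hRHS : Tendsto (fun n => -(1/d) * (‖x n - yV n i‖ * ‖w - yV n i‖))
        atTop (nhds 0) := by
      have h1 : Tendsto (fun n => ‖x n - yV n i‖) atTop (nhds 0) := by
        have := (hq.sub (hyVq i)).norm
        simpa using this
      have h2 : Tendsto (fun n => ‖w - yV n i‖) atTop (nhds ‖w - q‖) :=
        ((tendsto_const_nhds (x := w)).sub (hyVq i)).norm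
      have := (h1.mul h2).const_mul (-(1/d))
      simpa using this
    have hineq : ∀ n, -(1/d) * (‖x n - yV n i‖ * ‖w - yV n i‖)
        ≤ ⟪A i (x n), w - yV n i⟫ := by
      intro n
      have hchar := aux_isProjOn_inner hCcv (hyV n i) hw
      have hexp : ⟪(x n - r n • A i (x n)) - yV n i, w - yV n i⟫
          = ⟪x n - yV n i, w - yV n i⟫ - r n * ⟪A i (x n), w - yV n i⟫ := by
        rw [show (x n - r n • A i (x n)) - yV n i
            = (x n - yV n i) - r n • A i (x n) from by abel,
          inner_sub_left, real_inner_smul_left]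
      rw [hexp] at hchar
      have habs : -(‖x n - yV n i‖ * ‖w - yV n i‖) ≤ ⟪x n - yV n i, w - yV n i⟫ := by
        have h3 := abs_real_inner_le_norm (x n - yV n i) (w - yV n i)
        have h4 := neg_abs_le ⟪x n - yV n i, w - yV n i⟫
        linarith
      rcases le_or_gt 0 ⟪A i (x n), w - yV n i⟫ with hip | hip
      · have h5 : 0 ≤ (1/d) * (‖x n - yV n i‖ * ‖w - yV n i‖) := by positivity
        linarith
      · have h3 : d * (-⟪A i (x n), w - yV n i⟫) ≤ r n * (-⟪A i (x n), w - yV n i⟫) :=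
          mul_le_mul_of_nonneg_right (hr n).1 (by linarith)
        have h5 : d * (-⟪A i (x n), w - yV n i⟫) ≤ ‖x n - yV n i‖ * ‖w - yV n i‖ := by
          nlinarith [hchar, habs]
        rw [neg_mul, neg_le, one_div, inv_mul_eq_div, le_div_iff₀ hd]
        linarith
    exact le_of_tendsto_of_tendsto' hRHS hLHS hineq
  -- q solves the equilibrium problems
  have hqEP : ∀ i : Fin N, ∀ w ∈ C, 0 ≤ f i q w := by
    intro i w hw
    have hfwq : ∀ u ∈ C, f i u q ≤ 0 := by
      intro u hu
      have hGlim : Tendsto (fun n => (1/d) * (‖u - yE n i‖ * ‖yE n i - x n‖))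
          atTop (nhds 0) := by
        have h1 : Tendsto (fun n => ‖u - yE n i‖) atTop (nhds ‖u - q‖) :=
          ((tendsto_const_nhds (x := u)).sub (hyEq i)).norm
        have h2 : Tendsto (fun n => ‖yE n i - x n‖) atTop (nhds 0) :=
          squeeze_zero (fun n => norm_nonneg _) (fun n => (hybar n).2.1 i) hybx
        have := (h1.mul h2).const_mul (1/d)
        simpa using this
      have hub : ∀ n, f i u (yE n i) ≤ (1/d) * (‖u - yE n i‖ * ‖yE n i - x n‖) := by
        intro n
        have h1 := (hyE n i).2 u hu
        have h2 := hfA2 i (yE n i) (hyEC n i) u hu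
        have h3 := abs_real_inner_le_norm (u - yE n i) (yE n i - x n)
        have h4 : (1/(r n)) * ⟪u - yE n i, yE n i - x n⟫
            ≤ (1/d) * (‖u - yE n i‖ * ‖yE n i - x n‖) := by
          have h5 : (1/(r n)) ≤ 1/d := one_div_le_one_div_of_le hd (hr n).1
          rcases le_or_gt 0 ⟪u - yE n i, yE n i - x n⟫ with h6 | h6
          · calc (1/(r n)) * ⟪u - yE n i, yE n i - x n⟫
                ≤ (1/d) * ⟪u - yE n i, yE n i - x n⟫ := mul_le_mul_of_nonneg_right h5 h6
              _ ≤ (1/d) * (‖u - yE n i‖ * ‖yE n i - x n‖) := by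
                  have h7 := le_trans (le_abs_self _) h3
                  have h8 : (0:ℝ) ≤ 1/d := by positivity
                  exact mul_le_mul_of_nonneg_left h7 h8
          · have h7 : (1/(r n)) * ⟪u - yE n i, yE n i - x n⟫ ≤ 0 :=
              mul_nonpos_of_nonneg_of_nonpos (one_div_nonneg.mpr (hr0 n).le) h6.le
            have h8 : 0 ≤ (1/d) * (‖u - yE n i‖ * ‖yE n i - x n‖) := by positivity
            linarith
        linarith
      by_contra hpos
      push_neg at hpos
      have hlsc := hfA4lsc i u hu q hqC
      have hev := hlsc (f i u q / 2) (by linarith)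
      have htd : Tendsto (fun n => yE n i) atTop (nhdsWithin q C) :=
        tendsto_nhdsWithin_of_tendsto_nhds_of_eventually_within _ (hyEq i)
          (Filter.Eventually.of_forall fun n => hyEC n i)
      have hev2 := htd.eventually hev
      have hev3 : ∀ᶠ n in atTop,
          (1/d) * (‖u - yE n i‖ * ‖yE n i - x n‖) < f i u q / 2 :=
        hGlim.eventually_lt_const (by linarith)
      obtain ⟨n, hn1, hn2⟩ := (hev2.and hev3).exists
      linarith [hub n]
    have hts : ∀ t : ℝ, 0 < t → t < 1 → 0 ≤ f i (t • w + (1 - t) • q) w := by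
      intro t ht0 ht1
      set wt := t • w + (1 - t) • q with hwt
      have hwtC : wt ∈ C := hCcv hw hqC ht0.le (by linarith) (by ring)
      have hconv := (hfA4conv i wt hwtC).2 hw hqC (le_of_lt ht0)
        (by linarith : (0:ℝ) ≤ 1 - t) (by ring)
      rw [← hwt] at hconv
      have h0 : f i wt wt = 0 := hfA1 i wt hwtC
      rw [h0] at hconv
      simp only [smul_eq_mul] at hconv
      have hq0 : f i wt q ≤ 0 := hfwq wt hwtC
      nlinarith [mul_nonpos_of_nonneg_of_nonpos (by linarith : (0:ℝ) ≤ 1 - t) hq0]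
    have hls := hfA3 i q hqC w hw w hw
    have h0le : 0 ≤ Filter.limsup (fun t : ℝ => f i (t • w + (1 - t) • q) w)
        (nhdsWithin 0 (Set.Ioi 0)) := by
      rw [Filter.limsup_eq]
      apply Real.sInf_nonneg
      intro y hy
      simp only [Set.mem_setOf_eq] at hy
      have hIoo : Set.Ioo (0:ℝ) 1 ∈ nhdsWithin (0:ℝ) (Set.Ioi 0) :=
        Ioo_mem_nhdsGT_of_mem ⟨le_rfl, one_pos⟩
      have hev : ∀ᶠ t : ℝ in nhdsWithin (0:ℝ) (Set.Ioi 0),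
          0 ≤ f i (t • w + (1 - t) • q) w := by
        filter_upwards [hIoo] with t ht
        exact hts t ht.1 ht.2
      obtain ⟨t, ht1, ht2⟩ := (hev.and hy).exists
      linarith
    linarith
  -- conclusion
  have hqF : q ∈ F := by
    rw [hF]
    exact ⟨⟨⟨hqC, fun i y hy => hqEP i y hy⟩, ⟨hqC, fun i y hy => hqVI i y hy⟩⟩,
      fun j => hqS j⟩
  refine ⟨q, ⟨hqF, fun v hv => ?_⟩, hq⟩
  have h1 : ∀ n, ‖x (n + 1) - x 0‖ ≤ ‖v - x 0‖ :=
    fun n => (hxproj n).2 v (hFC v hv (n + 1))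
  have h2 : Tendsto (fun n => ‖x (n + 1) - x 0‖) atTop (nhds ‖q - x 0‖) :=
    (hq'.sub_const (x 0)).norm
  exact le_of_tendsto h2 (Filter.Eventually.of_forall h1)
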